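/- With the same hypotheses and projection operator as in the $L^\infty$-estimate, one has the $L^2$-error bound $\|u-u_{\Delta x}\|_{L^2(\mathbb{R})}\leq\sqrt{2}(1+\sqrt{2})\sqrt{F_{\mathrm{ac},\infty}}\,\Delta x$. -/

import Mathlib

open MeasureTheory intervalIntegral

/-- The slope average `Du_2j` on the double cell `[x_{2j}, x_{2j+2}]`. -/
noncomputable def Du (u : ℝ → ℝ) (Δx : ℝ) (j : ℤ) : ℝ :=
  (u ((2*(j:ℝ)+2)*Δx) - u ((2*(j:ℝ))*Δx)) / (2*Δx)

/-- The quantity `q_2j = sqrt(DF_ac,2j - (Du_2j)^2)`. -/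
noncomputable def qq (u u' : ℝ → ℝ) (Δx : ℝ) (j : ℤ) : ℝ :=
  Real.sqrt ((1/(2*Δx)) * (∫ z in ((2*(j:ℝ))*Δx)..((2*(j:ℝ)+2)*Δx), (u' z)^2)
    - (Du u Δx j)^2)

lemma cs_aux (u' : ℝ → ℝ) (hu'sq : Integrable (fun z => (u' z)^2)) {a b : ℝ} (hab : a ≤ b) :
    |∫ z in a..b, u' z| ≤ Real.sqrt (b-a) * Real.sqrt (∫ z in a..b, (u' z)^2) := by
  by_cases h : IntervalIntegrable u' volume a b
  · have h1 : |∫ z in a..b, u' z| ≤ ∫ z in a..b, |u' z| :=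
      intervalIntegral.abs_integral_le_integral_abs hab
    have h2 : (∫ z in a..b, |u' z|) ≤ Real.sqrt (b-a) * Real.sqrt (∫ z in a..b, (u' z)^2) := by
      rw [intervalIntegral.integral_of_le hab, intervalIntegral.integral_of_le hab]
      set μ := volume.restrict (Set.Ioc a b)
      have hfin : IsFiniteMeasure μ := by
        constructor
        rw [Measure.restrict_apply_univ]
        simp [Real.volume_Ioc]
      have haesm : AEStronglyMeasurable (fun z => |u' z|) μ := by
        have : AEStronglyMeasurable (fun z => Real.sqrt ((u' z)^2)) μ :=
          Real.continuous_sqrt.comp_aestronglyMeasurable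
            (hu'sq.aestronglyMeasurable.restrict)
        refine this.congr ?_
        filter_upwards with z using by rw [Real.sqrt_sq_eq_abs]
      have hmem : MemLp (fun z => |u' z|) (ENNReal.ofReal 2) μ := by
        have : ENNReal.ofReal 2 = 2 := by norm_num
        rw [this]
        refine (memLp_two_iff_integrable_sq haesm).2 ?_
        have : Integrable (fun z => (u' z)^2) μ := hu'sq.restrict
        refine this.congr ?_
        filter_upwards with z using by rw [sq_abs]
      have hmem1 : MemLp (fun _ : ℝ => (1:ℝ)) (ENNReal.ofReal 2) μ := memLp_const 1
      have hpq : Real.HolderConjugate 2 2 := by constructor <;> norm_num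
      have := integral_mul_le_Lp_mul_Lq_of_nonneg (μ := μ) hpq
        (Filter.Eventually.of_forall fun z => abs_nonneg _)
        (Filter.Eventually.of_forall fun z => zero_le_one) hmem hmem1
      simp only [mul_one, Real.one_rpow] at this
      calc (∫ z, |u' z| ∂μ) ≤ (∫ z, |u' z| ^ (2:ℝ) ∂μ) ^ (1/(2:ℝ)) * (∫ _, (1:ℝ) ∂μ) ^ (1/(2:ℝ)) := this
        _ = Real.sqrt (b-a) * Real.sqrt (∫ z, (u' z)^2 ∂μ) := by
            have e1 : (∫ z, |u' z| ^ (2:ℝ) ∂μ) = ∫ z, (u' z)^2 ∂μ := by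
              refine integral_congr_ae (Filter.Eventually.of_forall fun z => ?_)
              show |u' z| ^ (2:ℝ) = u' z ^ 2
              rw [show ((2:ℝ)) = ((2:ℕ):ℝ) by norm_num, Real.rpow_natCast, sq_abs]
            rw [e1, MeasureTheory.integral_const, smul_eq_mul, mul_one,
              measureReal_def, Measure.restrict_apply_univ, Real.volume_Ioc,
              ENNReal.toReal_ofReal (by linarith : (0:ℝ) ≤ b - a),
              ← Real.sqrt_eq_rpow, ← Real.sqrt_eq_rpow, mul_comm]
    linarith
  · rw [intervalIntegral.integral_undef h]
    simp
    positivity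

lemma tri_abs (p q : ℝ) : |p - q| ≤ |p| + |q| := by
  rw [sub_eq_add_neg]
  exact (abs_add_le _ _).trans (by rw [abs_neg])

lemma pointwise_est (u u' uD : ℝ → ℝ) (Δx : ℝ) (hΔx : 0 < Δx)
    (hu : ∀ a b : ℝ, u b - u a = ∫ z in a..b, u' z)
    (hu'sq : Integrable (fun z => (u' z)^2))
    (s : ℤ → ℝ) (hs : ∀ j, s j = 1 ∨ s j = -1)
    (huD1 : ∀ j : ℤ, ∀ x ∈ Set.Icc ((2*(j:ℝ))*Δx) ((2*(j:ℝ)+1)*Δx),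
      uD x = u ((2*(j:ℝ))*Δx) + (Du u Δx j - s j * qq u u' Δx j) * (x - (2*(j:ℝ))*Δx))
    (huD2 : ∀ j : ℤ, ∀ x ∈ Set.Icc ((2*(j:ℝ)+1)*Δx) ((2*(j:ℝ)+2)*Δx),
      uD x = u ((2*(j:ℝ)+2)*Δx) + (Du u Δx j + s j * qq u u' Δx j) * (x - (2*(j:ℝ)+2)*Δx))
    (j : ℤ) (x : ℝ) (hx : x ∈ Set.Icc ((2*(j:ℝ))*Δx) ((2*(j:ℝ)+2)*Δx)) :
    |u x - uD x| ≤ (1 + Real.sqrt 2) *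
      Real.sqrt (∫ z in ((2*(j:ℝ))*Δx)..((2*(j:ℝ)+2)*Δx), (u' z)^2) * Real.sqrt Δx := by
  set A := (2*(j:ℝ))*Δx with hA
  set M := (2*(j:ℝ)+1)*Δx with hM
  set B := (2*(j:ℝ)+2)*Δx with hB
  set F := ∫ z in A..B, (u' z)^2 with hF
  have hMA : M - A = Δx := by rw [hM, hA]; ring
  have hBM : B - M = Δx := by rw [hB, hM]; ring
  have hBA : B - A = 2*Δx := by rw [hB, hA]; ring
  have hAB : A ≤ B := by linarith
  have hFnn : 0 ≤ F := intervalIntegral.integral_nonneg hAB (fun z _ => sq_nonneg _)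
  have hsD : (0:ℝ) < Real.sqrt Δx := Real.sqrt_pos.2 hΔx
  have hsD2 : Real.sqrt Δx ^ 2 = Δx := Real.sq_sqrt hΔx.le
  have hs2 : (0:ℝ) < Real.sqrt 2 := Real.sqrt_pos.2 two_pos
  have hs22 : Real.sqrt 2 ^ 2 = 2 := Real.sq_sqrt two_pos.le
  have hsF : (0:ℝ) ≤ Real.sqrt F := Real.sqrt_nonneg _
  have hs2D : Real.sqrt (2*Δx) = Real.sqrt 2 * Real.sqrt Δx := Real.sqrt_mul two_pos.le _
  -- bound on |Du|
  have hD : |Du u Δx j| ≤ Real.sqrt F / Real.sqrt (2*Δx) := by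
    have h1 : |∫ z in A..B, u' z| ≤ Real.sqrt (B-A) * Real.sqrt F :=
      cs_aux u' hu'sq hAB
    rw [hBA] at h1
    have h2 : Du u Δx j = (∫ z in A..B, u' z) / (2*Δx) := by
      rw [Du, ← hu A B]
    rw [h2, abs_div, abs_of_pos (by linarith : (0:ℝ) < 2*Δx)]
    rw [div_le_div_iff₀ (by linarith) (by rw [hs2D]; positivity)]
    calc |∫ z in A..B, u' z| * Real.sqrt (2*Δx)
        ≤ (Real.sqrt (2*Δx) * Real.sqrt F) * Real.sqrt (2*Δx) := by
          apply mul_le_mul_of_nonneg_right h1 (Real.sqrt_nonneg _)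
      _ = Real.sqrt F * (2*Δx) := by
          have h3 : Real.sqrt (2*Δx) ^ 2 = 2*Δx := Real.sq_sqrt (by linarith)
          linear_combination Real.sqrt F * h3
  -- bound on qq
  have hq : qq u u' Δx j ≤ Real.sqrt F / Real.sqrt (2*Δx) := by
    rw [qq, ← hA, ← hB, ← hF]
    calc Real.sqrt ((1/(2*Δx)) * F - (Du u Δx j)^2)
        ≤ Real.sqrt ((1/(2*Δx)) * F) := Real.sqrt_le_sqrt (by nlinarith [sq_nonneg (Du u Δx j)])
      _ = Real.sqrt F / Real.sqrt (2*Δx) := by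
          rw [one_div, inv_mul_eq_div, Real.sqrt_div' F (by positivity)]
  have hqnn : 0 ≤ qq u u' Δx j := Real.sqrt_nonneg _
  have hsj : |s j| = 1 := by rcases hs j with h | h <;> rw [h] <;> norm_num
  have hDq1 : ∀ ε : ℝ, |ε| = 1 → |Du u Δx j + ε * qq u u' Δx j| ≤ 2 * Real.sqrt F / Real.sqrt (2*Δx) := by
    intro ε hε
    have := abs_add_le (Du u Δx j) (ε * qq u u' Δx j)
    rw [abs_mul, hε, one_mul, abs_of_nonneg hqnn] at this
    have h2D : (0:ℝ) < Real.sqrt (2*Δx) := by rw [hs2D]; positivity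
    calc |Du u Δx j + ε * qq u u' Δx j| ≤ |Du u Δx j| + qq u u' Δx j := this
      _ ≤ Real.sqrt F / Real.sqrt (2*Δx) + Real.sqrt F / Real.sqrt (2*Δx) := add_le_add hD hq
      _ = 2 * Real.sqrt F / Real.sqrt (2*Δx) := by ring
  have key : (2 * Real.sqrt F / Real.sqrt (2*Δx)) * Δx = Real.sqrt 2 * Real.sqrt F * Real.sqrt Δx := by
    rw [hs2D, div_mul_eq_mul_div, div_eq_iff (by positivity : Real.sqrt 2 * Real.sqrt Δx ≠ 0)]
    linear_combination (-(Real.sqrt F * Real.sqrt Δx^2)) * hs22 + (-(2 * Real.sqrt F)) * hsD2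
  have hIntSq : IntervalIntegrable (fun z => (u' z)^2) volume A B :=
    hu'sq.intervalIntegrable
  rcases le_total x M with hxm | hxm
  · -- first half-cell
    have e : u x - uD x = (∫ z in A..x, u' z) - (Du u Δx j - s j * qq u u' Δx j) * (x - A) := by
      rw [huD1 j x ⟨hx.1, hxm⟩]
      linear_combination hu A x
    have hsub : (∫ z in A..x, (u' z)^2) ≤ F :=
      intervalIntegral.integral_mono_interval le_rfl hx.1 (by linarith [hx.2])
        (Filter.Eventually.of_forall fun z => sq_nonneg _) hIntSq
    have b1 : |∫ z in A..x, u' z| ≤ Real.sqrt Δx * Real.sqrt F := by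
      refine (cs_aux u' hu'sq hx.1).trans ?_
      apply mul_le_mul (Real.sqrt_le_sqrt (by linarith [hx.1, hxm]))
        (Real.sqrt_le_sqrt hsub) (Real.sqrt_nonneg _) (Real.sqrt_nonneg _)
    have b2 : |(Du u Δx j - s j * qq u u' Δx j) * (x - A)|
        ≤ (2 * Real.sqrt F / Real.sqrt (2*Δx)) * Δx := by
      rw [abs_mul]
      apply mul_le_mul ?_ ?_ (abs_nonneg _) (by positivity)
      · have : Du u Δx j - s j * qq u u' Δx j = Du u Δx j + (-(s j)) * qq u u' Δx j := by ring
        rw [this]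
        exact hDq1 _ (by rw [abs_neg, hsj])
      · rw [abs_of_nonneg (by linarith [hx.1])]; linarith
    calc |u x - uD x| ≤ |∫ z in A..x, u' z|
          + |(Du u Δx j - s j * qq u u' Δx j) * (x - A)| := by rw [e]; exact tri_abs _ _
      _ ≤ Real.sqrt Δx * Real.sqrt F + (2 * Real.sqrt F / Real.sqrt (2*Δx)) * Δx :=
          add_le_add b1 b2
      _ = (1 + Real.sqrt 2) * Real.sqrt F * Real.sqrt Δx := by rw [key]; ring
  · -- second half-cell
    have e : u x - uD x
        = -((∫ z in x..B, u' z) - (Du u Δx j + s j * qq u u' Δx j) * (B - x)) := by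
      rw [huD2 j x ⟨hxm, hx.2⟩]
      linear_combination (-1 : ℝ) * hu x B
    have hsub : (∫ z in x..B, (u' z)^2) ≤ F :=
      intervalIntegral.integral_mono_interval (by linarith [hx.1]) hx.2 le_rfl
        (Filter.Eventually.of_forall fun z => sq_nonneg _) hIntSq
    have b1 : |∫ z in x..B, u' z| ≤ Real.sqrt Δx * Real.sqrt F := by
      refine (cs_aux u' hu'sq hx.2).trans ?_
      apply mul_le_mul (Real.sqrt_le_sqrt (by linarith [hx.2, hxm]))
        (Real.sqrt_le_sqrt hsub) (Real.sqrt_nonneg _) (Real.sqrt_nonneg _)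
    have b2 : |(Du u Δx j + s j * qq u u' Δx j) * (B - x)|
        ≤ (2 * Real.sqrt F / Real.sqrt (2*Δx)) * Δx := by
      rw [abs_mul]
      apply mul_le_mul (hDq1 _ hsj) ?_ (abs_nonneg _) (by positivity)
      rw [abs_of_nonneg (by linarith [hx.2])]; linarith
    calc |u x - uD x| ≤ |∫ z in x..B, u' z|
          + |(Du u Δx j + s j * qq u u' Δx j) * (B - x)| := by
            rw [e, abs_neg]; exact tri_abs _ _
      _ ≤ Real.sqrt Δx * Real.sqrt F + (2 * Real.sqrt F / Real.sqrt (2*Δx)) * Δx :=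
          add_le_add b1 b2
      _ = (1 + Real.sqrt 2) * Real.sqrt F * Real.sqrt Δx := by rw [key]; ring

/-- `L^2`-error estimate for the piecewise linear projection `u_Δx`. -/
theorem stmt3 (u u' uD : ℝ → ℝ) (Δx : ℝ) (hΔx : 0 < Δx)
    (hu : ∀ a b : ℝ, u b - u a = ∫ z in a..b, u' z)
    (hu'sq : Integrable (fun z => (u' z)^2))
    (s : ℤ → ℝ) (hs : ∀ j, s j = 1 ∨ s j = -1)
    (huD1 : ∀ j : ℤ, ∀ x ∈ Set.Icc ((2*(j:ℝ))*Δx) ((2*(j:ℝ)+1)*Δx),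
      uD x = u ((2*(j:ℝ))*Δx) + (Du u Δx j - s j * qq u u' Δx j) * (x - (2*(j:ℝ))*Δx))
    (huD2 : ∀ j : ℤ, ∀ x ∈ Set.Icc ((2*(j:ℝ)+1)*Δx) ((2*(j:ℝ)+2)*Δx),
      uD x = u ((2*(j:ℝ)+2)*Δx) + (Du u Δx j + s j * qq u u' Δx j) * (x - (2*(j:ℝ)+2)*Δx)) :
    eLpNorm (fun x => u x - uD x) 2 volume
      ≤ ENNReal.ofReal (Real.sqrt 2 * (1 + Real.sqrt 2) * Real.sqrt (∫ z, (u' z)^2) * Δx) := by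
  have hFinf : (0:ℝ) ≤ ∫ z, (u' z)^2 := integral_nonneg (fun z => sq_nonneg _)
  set C := Real.sqrt 2 * (1 + Real.sqrt 2) * Real.sqrt (∫ z, (u' z)^2) * Δx with hC
  have hs2 : (0:ℝ) < Real.sqrt 2 := Real.sqrt_pos.2 two_pos
  have hCnn : 0 ≤ C := by rw [hC]; positivity
  set Fc : ℤ → ℝ := fun j => ∫ z in ((2*(j:ℝ))*Δx)..((2*(j:ℝ)+2)*Δx), (u' z)^2 with hFc
  have hab : ∀ j : ℤ, (2*(j:ℝ))*Δx ≤ (2*(j:ℝ)+2)*Δx := fun j => by nlinarith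
  have hFcnn : ∀ j, 0 ≤ Fc j := fun j =>
    intervalIntegral.integral_nonneg (hab j) (fun z _ => sq_nonneg _)
  have hHop : ∀ m n : ℤ, m < n → (2*(m:ℝ)+2)*Δx ≤ (2*(n:ℝ))*Δx := by
    intro m n hmn
    have : (m:ℝ) + 1 ≤ n := by exact_mod_cast hmn
    nlinarith
  set K := (1 + Real.sqrt 2)^2 * Δx * (2*Δx) with hK
  have hKnn : 0 ≤ K := by rw [hK]; positivity
  -- the partition into double cells (Ico version)
  set S : ℤ → Set ℝ := fun j => Set.Ico ((2*(j:ℝ))*Δx) ((2*(j:ℝ)+2)*Δx) with hS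
  have hSm : ∀ j, MeasurableSet (S j) := fun j => measurableSet_Ico
  have hSd : Pairwise (Function.onFun Disjoint S) := by
    intro j k hjk
    rw [Function.onFun, hS, Set.Ico_disjoint_Ico]
    rcases hjk.lt_or_gt with h | h
    · exact le_trans (min_le_left _ _) (le_trans (hHop _ _ h) (le_max_right _ _))
    · exact le_trans (min_le_right _ _) (le_trans (hHop _ _ h) (le_max_left _ _))
  have hScover : ⋃ j, S j = Set.univ := by
    ext x
    simp only [Set.mem_iUnion, Set.mem_univ, iff_true, hS, Set.mem_Ico]
    refine ⟨⌊x/(2*Δx)⌋, ?_, ?_⟩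
    · have h1 : ((⌊x/(2*Δx)⌋:ℝ)) * (2*Δx) ≤ x :=
        (le_div_iff₀ (by linarith)).1 (Int.floor_le _)
      linarith
    · have h1 : x < ((⌊x/(2*Δx)⌋:ℝ) + 1) * (2*Δx) :=
        (div_lt_iff₀ (by linarith)).1 (Int.lt_floor_add_one _)
      linarith
  -- Ioc version
  set T : ℤ → Set ℝ := fun j => Set.Ioc ((2*(j:ℝ))*Δx) ((2*(j:ℝ)+2)*Δx) with hT
  have hTm : ∀ j, MeasurableSet (T j) := fun j => measurableSet_Ioc
  have hTd : Pairwise (Function.onFun Disjoint T) := by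
    intro j k hjk
    rw [Function.onFun, hT, Set.Ioc_disjoint_Ioc]
    rcases hjk.lt_or_gt with h | h
    · exact le_trans (min_le_left _ _) (le_trans (hHop _ _ h) (le_max_right _ _))
    · exact le_trans (min_le_right _ _) (le_trans (hHop _ _ h) (le_max_left _ _))
  have hTcover : ⋃ j, T j = Set.univ := by
    ext x
    simp only [Set.mem_iUnion, Set.mem_univ, iff_true, hT, Set.mem_Ioc]
    refine ⟨⌈x/(2*Δx)⌉ - 1, ?_, ?_⟩
    · have h1 : ((⌈x/(2*Δx)⌉:ℝ) - 1) * (2*Δx) < x := by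
        refine (lt_div_iff₀ (by linarith : (0:ℝ) < 2*Δx)).1 ?_
        linarith [Int.ceil_lt_add_one (x/(2*Δx))]
      push_cast
      linarith
    · have h1 : x ≤ ((⌈x/(2*Δx)⌉:ℝ) - 1 + 1) * (2*Δx) := by
        rw [sub_add_cancel]
        exact (div_le_iff₀ (by linarith)).1 (Int.le_ceil _)
      push_cast
      linarith
  -- sum of the cell energies
  have hsum : ∑' j : ℤ, ENNReal.ofReal (Fc j) = ENNReal.ofReal (∫ z, (u' z)^2) := by
    have e1 : ∀ j : ℤ, ENNReal.ofReal (Fc j) = ∫⁻ z in T j, ENNReal.ofReal ((u' z)^2) := by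
      intro j
      rw [hFc]
      simp only
      rw [intervalIntegral.integral_of_le (hab j)]
      exact ofReal_integral_eq_lintegral_ofReal hu'sq.restrict
        (Filter.Eventually.of_forall fun z => sq_nonneg _)
    rw [tsum_congr e1, ← lintegral_iUnion hTm hTd, hTcover, setLIntegral_univ,
      ← ofReal_integral_eq_lintegral_ofReal hu'sq
        (Filter.Eventually.of_forall fun z => sq_nonneg _)]
  -- per-cell bound
  have cell : ∀ j : ℤ, (∫⁻ x in S j, (‖u x - uD x‖₊ : ENNReal) ^ (2:ℝ))
      ≤ ENNReal.ofReal K * ENNReal.ofReal (Fc j) := by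
    intro j
    set Bj := (1 + Real.sqrt 2) * Real.sqrt (Fc j) * Real.sqrt Δx with hBj
    have hBjnn : 0 ≤ Bj := by rw [hBj]; positivity
    have step1 : (∫⁻ x in S j, (‖u x - uD x‖₊ : ENNReal) ^ (2:ℝ))
        ≤ ∫⁻ _ in S j, ENNReal.ofReal (Bj^2) := by
      refine setLIntegral_mono measurable_const (fun x hx => ?_)
      have hpt : |u x - uD x| ≤ Bj := by
        refine pointwise_est u u' uD Δx hΔx hu hu'sq s hs huD1 huD2 j x ?_
        exact Set.Ico_subset_Icc_self hx
      rw [show ((‖u x - uD x‖₊ : ENNReal)) = ENNReal.ofReal |u x - uD x| from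
        Real.enorm_eq_ofReal_abs _]
      rw [ENNReal.ofReal_rpow_of_nonneg (abs_nonneg _) (by norm_num)]
      apply ENNReal.ofReal_le_ofReal
      rw [show ((2:ℝ)) = ((2:ℕ):ℝ) by norm_num, Real.rpow_natCast]
      exact pow_le_pow_left₀ (abs_nonneg _) hpt 2
    have step2 : (∫⁻ _ in S j, ENNReal.ofReal (Bj^2))
        = ENNReal.ofReal (Bj^2) * ENNReal.ofReal (2*Δx) := by
      rw [setLIntegral_const]
      congr 1
      rw [hS]
      simp only
      rw [Real.volume_Ico, show (2*(j:ℝ)+2)*Δx - (2*(j:ℝ))*Δx = 2*Δx by ring]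
    have step3 : ENNReal.ofReal (Bj^2) * ENNReal.ofReal (2*Δx)
        = ENNReal.ofReal K * ENNReal.ofReal (Fc j) := by
      rw [← ENNReal.ofReal_mul (sq_nonneg _), ← ENNReal.ofReal_mul hKnn]
      congr 1
      rw [hBj, hK, mul_pow, mul_pow, Real.sq_sqrt (hFcnn j), Real.sq_sqrt hΔx.le]
      ring
    calc (∫⁻ x in S j, (‖u x - uD x‖₊ : ENNReal) ^ (2:ℝ))
        ≤ ∫⁻ _ in S j, ENNReal.ofReal (Bj^2) := step1
      _ = ENNReal.ofReal (Bj^2) * ENNReal.ofReal (2*Δx) := step2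
      _ = ENNReal.ofReal K * ENNReal.ofReal (Fc j) := step3
  -- total lintegral bound
  have total : (∫⁻ x, (‖u x - uD x‖₊ : ENNReal) ^ (2:ℝ)) ≤ ENNReal.ofReal (C^2) := by
    have hsplit : (∫⁻ x, (‖u x - uD x‖₊ : ENNReal) ^ (2:ℝ))
        = ∑' j : ℤ, ∫⁻ x in S j, (‖u x - uD x‖₊ : ENNReal) ^ (2:ℝ) := by
      rw [← setLIntegral_univ, ← hScover, lintegral_iUnion hSm hSd]
    rw [hsplit]
    calc (∑' j : ℤ, ∫⁻ x in S j, (‖u x - uD x‖₊ : ENNReal) ^ (2:ℝ))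
        ≤ ∑' j : ℤ, ENNReal.ofReal K * ENNReal.ofReal (Fc j) := ENNReal.tsum_le_tsum cell
      _ = ENNReal.ofReal K * ∑' j : ℤ, ENNReal.ofReal (Fc j) := ENNReal.tsum_mul_left
      _ = ENNReal.ofReal K * ENNReal.ofReal (∫ z, (u' z)^2) := by rw [hsum]
      _ = ENNReal.ofReal (C^2) := by
          rw [← ENNReal.ofReal_mul hKnn]
          congr 1
          rw [hK, hC, mul_pow, mul_pow, mul_pow, Real.sq_sqrt hFinf, Real.sq_sqrt two_pos.le]
          ring
  -- conclude
  rw [eLpNorm_eq_lintegral_rpow_enorm_toReal (by norm_num) (by norm_num)]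
  have htr : ((2:ENNReal)).toReal = (2:ℝ) := by norm_num
  rw [htr]
  have hback : ENNReal.ofReal C = (ENNReal.ofReal (C^2)) ^ ((1:ℝ)/2) := by
    rw [ENNReal.ofReal_rpow_of_nonneg (sq_nonneg _) (by norm_num)]
    congr 1
    rw [← Real.sqrt_eq_rpow, Real.sqrt_sq hCnn]
  rw [hback, one_div]
  exact ENNReal.rpow_le_rpow total (by norm_num)
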